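/- Let X be a set and let G ≤ Equiv.Perm X act transitively on X. If G is the operator group of some rack (X, ▷) on X, then there exists π ∈ G whose normal closure in G is equal to G. -/

import Mathlib

/-- A rack: right multiplications are bijections, and self-distributivity holds. -/
def IsRack {X : Type*} (op : X → X → X) : Prop :=
  (∀ y : X, Function.Bijective fun x => op x y) ∧
  ∀ x y z : X, op (op x y) z = op (op x z) (op y z)

/-- The operator group of a binary operation: the subgroup of `Equiv.Perm X` generated by
the permutations `x ↦ x ▷ y` for `y ∈ X`. -/
def OpGroup {X : Type*} (op : X → X → X) : Subgroup (Equiv.Perm X) :=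
  Subgroup.closure {σ : Equiv.Perm X | ∃ y : X, ∀ x : X, σ x = op x y}

/-- If a transitive group `G ≤ Equiv.Perm X` is the operator group of some rack on `X`,
then some element `π ∈ G` has normal closure in `G` equal to `G`. -/
theorem transitive_opgroup_has_generating_normal_closure {X : Type*}
    (G : Subgroup (Equiv.Perm X)) (htrans : ∀ x y : X, ∃ g ∈ G, g x = y)
    (op : X → X → X) (hop : IsRack op) (hG : OpGroup op = G) :
    ∃ π ∈ G, Subgroup.closure {σ : Equiv.Perm X | ∃ g ∈ G, σ = g * π * g⁻¹} = G := by
  classical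
  rcases isEmpty_or_nonempty X with hX | hX
  · have hall : ∀ σ : Equiv.Perm X, σ = 1 := fun σ => Equiv.ext fun x => (hX.false x).elim
    refine ⟨1, one_mem G, ?_⟩
    ext σ
    rw [hall σ]
    simp [one_mem]
  · set f : X → Equiv.Perm X := fun y => Equiv.ofBijective _ (hop.1 y) with hf
    have hfapp : ∀ y x, f y x = op x y := fun y x => rfl
    have hfeq : ∀ (σ : Equiv.Perm X) (y : X), (∀ x, σ x = op x y) → σ = f y := by
      intro σ y h; ext x; rw [h x, hfapp]
    have key : ∀ z y, f z * f y = f (op y z) * f z := by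
      intro z y; ext x
      simp only [Equiv.Perm.mul_apply, hfapp]
      exact hop.2 x y z
    have hconj : ∀ g ∈ G, ∀ y, g * f y * g⁻¹ = f (g y) := by
      rw [← hG]
      intro g hg
      induction hg using Subgroup.closure_induction with
      | mem σ hσ =>
        obtain ⟨z, hz⟩ := hσ
        have : σ = f z := hfeq σ z hz
        subst this
        intro y
        rw [key z y, mul_inv_cancel_right]
        rfl
      | one => intro y; simp
      | mul a b _ _ iha ihb =>
        intro y
        have : a * b * f y * (a * b)⁻¹ = a * (b * f y * b⁻¹) * a⁻¹ := by group
        rw [this, ihb y, iha (b y)]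
        rfl
      | inv a _ iha =>
        intro y
        have h := iha (a⁻¹ y)
        rw [show a (a⁻¹ y) = y from a.apply_symm_apply y] at h
        rw [← h]
        group
    obtain ⟨x₀⟩ := hX
    refine ⟨f x₀, ?_, ?_⟩
    · rw [← hG]
      exact Subgroup.subset_closure ⟨x₀, fun x => rfl⟩
    · apply le_antisymm
      · rw [Subgroup.closure_le]
        rintro σ ⟨g, hg, rfl⟩
        have hπ : f x₀ ∈ G := by
          rw [← hG]; exact Subgroup.subset_closure ⟨x₀, fun x => rfl⟩
        exact mul_mem (mul_mem hg hπ) (inv_mem hg)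
      · conv_lhs => rw [← hG]
        rw [OpGroup, Subgroup.closure_le]
        rintro σ ⟨y, hy⟩
        have : σ = f y := hfeq σ y hy
        subst this
        obtain ⟨g, hg, hgx⟩ := htrans x₀ y
        have := hconj g hg x₀
        rw [hgx] at this
        exact Subgroup.subset_closure ⟨g, hg, this.symm⟩
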